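/- If T is a clique tree of a chordal graph G and QQ' is an edge of T, then Q ∩ Q' is a minimal separator of G; in fact, Q ∩ Q' is a minimal {v,v'}-separator for any v ∈ Q \ Q' and v' ∈ Q' \ Q. -/

import Mathlib

open SimpleGraph

variable {V : Type*}

/-- `S` separates `u` and `w` in `G`: every walk from `u` to `w` meets `S`. -/
def Separates (G : SimpleGraph V) (S : Set V) (u w : V) : Prop :=
  ∀ p : G.Walk u w, ∃ x ∈ p.support, x ∈ S

/-- `S` is a minimal `{u,w}`-separator. -/
def IsMinUWSeparator (G : SimpleGraph V) (S : Set V) (u w : V) : Prop :=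
  u ≠ w ∧ ¬ G.Adj u w ∧ u ∉ S ∧ w ∉ S ∧ Separates G S u w ∧
    ∀ S' ⊂ S, ¬ Separates G S' u w

/-- `S` is a minimal separator of `G`. -/
def IsMinSeparator (G : SimpleGraph V) (S : Set V) : Prop :=
  ∃ u w : V, IsMinUWSeparator G S u w

/-- A vertex is simplicial if its neighborhood is a clique. -/
def IsSimplicial (G : SimpleGraph V) (v : V) : Prop :=
  G.IsClique (G.neighborSet v)

/-- A maximal clique (as a vertex set). -/
def IsMaxClique (G : SimpleGraph V) (s : Set V) : Prop :=
  G.IsClique s ∧ ∀ t : Set V, G.IsClique t → s ⊆ t → s = t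

/-- A graph is chordal if it has no induced cycle of length at least 4. -/
def Chordal (G : SimpleGraph V) : Prop :=
  ∀ n : ℕ, 4 ≤ n → IsEmpty (SimpleGraph.cycleGraph n ↪g G)

/-- The type of maximal cliques of `G`. -/
abbrev MaxCliques (G : SimpleGraph V) := {s : Set V // IsMaxClique G s}

/-- `T` is a clique tree of `G`: a tree on the maximal cliques such that for each vertex
the cliques containing it induce a connected subgraph. -/
def IsCliqueTree (G : SimpleGraph V) (T : SimpleGraph (MaxCliques G)) : Prop :=
  T.IsTree ∧ ∀ v : V, (T.induce {Q : MaxCliques G | v ∈ Q.1}).Connected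

/-- The set `X` induces a path in `T` (assuming `T` is a tree: connected with max degree 2). -/
def InducesPath {α : Type*} (T : SimpleGraph α) (X : Set α) : Prop :=
  (T.induce X).Connected ∧ ∀ x : X, ((T.induce X).neighborSet x).ncard ≤ 2

/-- `T` is a clique path tree of `G`. -/
def IsCliquePathTree (G : SimpleGraph V) (T : SimpleGraph (MaxCliques G)) : Prop :=
  T.IsTree ∧ ∀ v : V, InducesPath T {Q : MaxCliques G | v ∈ Q.1}

/-- `G` is a path graph: the empty graph, or a graph admitting a clique path tree. -/
def IsPathGraph (G : SimpleGraph V) : Prop :=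
  IsEmpty V ∨ ∃ T : SimpleGraph (MaxCliques G), IsCliquePathTree G T

/-- `G` is an interval graph: intersection graph of closed real intervals. -/
def IsIntervalGraph (G : SimpleGraph V) : Prop :=
  ∃ f : V → Set ℝ, (∀ v, ∃ a b : ℝ, a ≤ b ∧ f v = Set.Icc a b) ∧
    ∀ u v : V, u ≠ v → (G.Adj u v ↔ (f u ∩ f v).Nonempty)

/-- `a` is a middle of `b, c`: every walk from `b` to `c` meets `N(a)`. -/
def IsMiddle (G : SimpleGraph V) (a b c : V) : Prop :=
  ∀ p : G.Walk b c, ∃ x ∈ p.support, G.Adj a x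

/-- `a, b, c` form an asteroidal triple. -/
def AsteroidalTriple (G : SimpleGraph V) (a b c : V) : Prop :=
  a ≠ b ∧ a ≠ c ∧ b ≠ c ∧ ¬ G.Adj a b ∧ ¬ G.Adj a c ∧ ¬ G.Adj b c ∧
  (∃ p : G.Walk b c, ∀ x ∈ p.support, ¬ G.Adj a x) ∧
  (∃ p : G.Walk a c, ∀ x ∈ p.support, ¬ G.Adj b x) ∧
  (∃ p : G.Walk a b, ∀ x ∈ p.support, ¬ G.Adj c x)

/-- The closed neighborhood clique `Q_v` of a simplicial vertex. -/
def Qv (G : SimpleGraph V) (v : V) : Set V := insert v (G.neighborSet v)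

/-- `S_v`: the vertices of `Q_v` having a neighbor outside `Q_v`. -/
def Sv (G : SimpleGraph V) (v : V) : Set V :=
  {x | x ∈ Qv G v ∧ ∃ y, y ∉ Qv G v ∧ G.Adj x y}

/-- A simplicial vertex is special if `S_v` is an inclusion-maximal minimal separator. -/
def IsSpecial (G : SimpleGraph V) (v : V) : Prop :=
  IsSimplicial G v ∧ IsMinSeparator G (Sv G v) ∧
    ∀ S : Set V, IsMinSeparator G S → Sv G v ⊆ S → S = Sv G v

/-- Connected components of `G ∖ S` containing a vertex complete to `S`. -/
def CompleteComponents (G : SimpleGraph V) (S : Set V) :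
    Set ((G.induce (Sᶜ : Set V)).ConnectedComponent) :=
  {C | ∃ x : (Sᶜ : Set V), (G.induce (Sᶜ : Set V)).connectedComponentMk x = C ∧
        S ⊆ G.neighborSet x.1}

/-- The wheel graph: an `n`-cycle plus a universal vertex (`none`). -/
def wheelGraph (n : ℕ) : SimpleGraph (Option (Fin n)) :=
  SimpleGraph.fromRel (fun a b =>
    (∃ i j : Fin n, a = some i ∧ b = some j ∧ (SimpleGraph.cycleGraph n).Adj i j) ∨
    (a = none ∧ b ≠ none))

/-- `y` lies on the tree-path between `x` and `z` in `T`. -/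
def OnTreePath {α : Type*} (T : SimpleGraph α) (x y z : α) : Prop :=
  ∃ p : T.Walk x z, p.IsPath ∧ y ∈ p.support


set_option linter.unusedSectionVars false

namespace CliqueTreeAux

variable {K : Type*} [DecidableEq K] {T : SimpleGraph K}

noncomputable def tp (hT : T.IsTree) (a b : K) : T.Walk a b :=
  (hT.existsUnique_path a b).choose

lemma tp_isPath (hT : T.IsTree) (a b : K) : (tp hT a b).IsPath :=
  (hT.existsUnique_path a b).choose_spec.1

lemma tp_eq (hT : T.IsTree) {a b : K} (p : T.Walk a b) (hp : p.IsPath) : p = tp hT a b :=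
  (hT.existsUnique_path a b).choose_spec.2 p hp

/-- `R` is on the `Q`-side of the edge `QQ'`. -/
def SideA (hT : T.IsTree) (Q Q' R : K) : Prop := Q ∈ (tp hT R Q').support

/-- `R` is on the `Q'`-side of the edge `QQ'`. -/
def SideB (hT : T.IsTree) (Q Q' R : K) : Prop := Q' ∈ (tp hT R Q).support

variable {Q Q' : K}

lemma edge_isPath (h : T.Adj Q Q') : (Walk.cons h Walk.nil).IsPath := by
  simp [Walk.isPath_def, h.ne]

lemma total (hT : T.IsTree) (h : T.Adj Q Q') (R : K) :
    SideA hT Q Q' R ∨ SideB hT Q Q' R := by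
  by_cases hb : Q' ∈ (tp hT R Q).support
  · exact Or.inr hb
  · left
    have hp : ((tp hT R Q).append (Walk.cons h Walk.nil)).IsPath := by
      rw [Walk.isPath_def, Walk.support_append]
      simp only [Walk.support_cons, Walk.support_nil, List.tail_cons]
      rw [List.nodup_append]
      refine ⟨(tp_isPath hT R Q).support_nodup, List.nodup_singleton _, ?_⟩
      intro a ha _ hb' hab
      simp only [List.mem_singleton] at hb'
      subst hb'
      exact hb (hab ▸ ha)
    unfold SideA
    rw [← tp_eq hT _ hp, Walk.mem_support_append_iff]
    exact Or.inl (Walk.end_mem_support _)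

lemma split (hT : T.IsTree) (h : T.Adj Q Q') {R : K}
    (hA : Q ∈ (tp hT R Q').support) :
    (tp hT R Q').support = (tp hT R Q).support ++ [Q'] := by
  have hps := tp_isPath hT R Q'
  have h1 := hps.takeUntil hA
  have h2 := hps.dropUntil hA
  have e2 : (tp hT R Q').dropUntil Q hA = Walk.cons h Walk.nil := by
    rw [tp_eq hT _ h2, tp_eq hT _ (edge_isPath h)]
  have e1 : (tp hT R Q').takeUntil Q hA = tp hT R Q := tp_eq hT _ h1
  conv_lhs => rw [← Walk.take_spec (tp hT R Q') hA]
  rw [Walk.support_append, e1, e2]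
  simp

lemma excl (hT : T.IsTree) (h : T.Adj Q Q') (R : K) :
    ¬ (SideA hT Q Q' R ∧ SideB hT Q Q' R) := by
  rintro ⟨hA, hB⟩
  have hs := split hT h hA
  have hnd := (tp_isPath hT R Q').support_nodup
  rw [hs, List.nodup_append] at hnd
  exact hnd.2.2 _ hB _ (List.mem_singleton_self _) rfl

lemma step_aux (hT : T.IsTree) (h : T.Adj Q Q') {R R' : K} (hadj : T.Adj R R')
    (hA : SideA hT Q Q' R) (hB : SideB hT Q Q' R') : R = Q := by
  have hs := split (Q := Q') (Q' := Q) hT h.symm (R := R') hB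
  have hnd := (tp_isPath hT R' Q).support_nodup
  rw [hs, List.nodup_append] at hnd
  have hQnot : Q ∉ (tp hT R' Q').support := fun hc =>
    hnd.2.2 _ hc _ (List.mem_singleton_self _) rfl
  by_cases hR : R ∈ (tp hT R' Q').support
  · exfalso
    have hd := (tp_isPath hT R' Q').dropUntil hR
    have he : (tp hT R' Q').dropUntil R hR = tp hT R Q' := tp_eq hT _ hd
    have : Q ∈ ((tp hT R' Q').dropUntil R hR).support := by rw [he]; exact hA
    exact hQnot (Walk.support_dropUntil_subset _ hR this)
  · have hp : (Walk.cons hadj (tp hT R' Q')).IsPath :=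
      (tp_isPath hT R' Q').cons hR
    have he : Walk.cons hadj (tp hT R' Q') = tp hT R Q' := tp_eq hT _ hp
    have : Q ∈ (Walk.cons hadj (tp hT R' Q')).support := by rw [he]; exact hA
    rw [Walk.support_cons, List.mem_cons] at this
    rcases this with h1 | h2
    · exact h1.symm
    · exact absurd h2 hQnot

lemma step (hT : T.IsTree) (h : T.Adj Q Q') {R R' : K} (hadj : T.Adj R R')
    (hA : SideA hT Q Q' R) (hB : SideB hT Q Q' R') : R = Q ∧ R' = Q' :=
  ⟨step_aux hT h hadj hA hB,
   step_aux (Q := Q') (Q' := Q) hT h.symm hadj.symm hB hA⟩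

lemma crossing (hT : T.IsTree) (h : T.Adj Q Q') {R₁ R₂ : K} (p : T.Walk R₁ R₂)
    (hB : SideB hT Q Q' R₂) :
    SideA hT Q Q' R₁ → Q ∈ p.support ∧ Q' ∈ p.support := by
  induction p with
  | nil => exact fun hA => absurd ⟨hA, hB⟩ (excl hT h _)
  | @cons a b c hadj p' ih =>
    intro hA
    rcases total hT h b with hA' | hB'
    · obtain ⟨h1, h2⟩ := ih hB hA'
      exact ⟨List.mem_cons_of_mem _ h1, List.mem_cons_of_mem _ h2⟩
    · obtain ⟨rfl, rfl⟩ := step hT h hadj hA hB'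
      exact ⟨Walk.start_mem_support _, List.mem_cons_of_mem _ (Walk.start_mem_support _)⟩

end CliqueTreeAux

open CliqueTreeAux

/-- Every clique extends to a maximal clique (finite vertex type). -/
lemma exists_isMaxClique_supset [Fintype V] (G : SimpleGraph V) {s : Set V}
    (hs : G.IsClique s) : ∃ t : Set V, IsMaxClique G t ∧ s ⊆ t := by
  have hfin : {t : Set V | G.IsClique t ∧ s ⊆ t}.Finite := Set.toFinite _
  obtain ⟨t, ht, hmax⟩ := Set.Finite.exists_maximalFor id _ hfin ⟨s, hs, subset_rfl⟩
  exact ⟨t, ⟨ht.1, fun u hu htu => htu.antisymm (hmax ⟨hu, ht.2.trans htu⟩ htu)⟩, ht.2⟩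

/-- All cliques on the tree path between two cliques containing `x` contain `x`. -/
lemma mem_of_on_tp {G : SimpleGraph V} [DecidableEq (MaxCliques G)]
    {T : SimpleGraph (MaxCliques G)} (hT : IsCliqueTree G T) {x : V}
    {R₁ R₂ : MaxCliques G} (h1 : x ∈ R₁.1) (h2 : x ∈ R₂.1) :
    ∀ R ∈ (tp hT.1 R₁ R₂).support, x ∈ R.1 := by
  obtain ⟨w⟩ := (hT.2 x).preconnected ⟨R₁, h1⟩ ⟨R₂, h2⟩
  let f := (SimpleGraph.Embedding.induce (G := T) {Q : MaxCliques G | x ∈ Q.1}).toHom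
  have hb : (w.map f).bypass = tp hT.1 R₁ R₂ := tp_eq _ _ (Walk.bypass_isPath _)
  intro R hR
  rw [← hb] at hR
  have hR' := Walk.support_bypass_subset _ hR
  replace hR' : R ∈ w.support.map f := by rwa [← Walk.support_map]
  obtain ⟨a, _, rfl⟩ := List.mem_map.1 hR'
  exact a.2

theorem stmt7 [Fintype V] (G : SimpleGraph V) (hG : Chordal G)
    (T : SimpleGraph (MaxCliques G)) (hT : IsCliqueTree G T)
    (Q Q' : MaxCliques G) (hQQ : T.Adj Q Q') :
    IsMinSeparator G (Q.1 ∩ Q'.1) ∧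
      ∀ v v' : V, v ∈ Q.1 → v ∉ Q'.1 → v' ∈ Q'.1 → v' ∉ Q.1 →
        IsMinUWSeparator G (Q.1 ∩ Q'.1) v v' := by
  classical
  have main : ∀ v v' : V, v ∈ Q.1 → v ∉ Q'.1 → v' ∈ Q'.1 → v' ∉ Q.1 →
      IsMinUWSeparator G (Q.1 ∩ Q'.1) v v' := by
    intro v v' hvQ hvQ' hv'Q' hv'Q
    have hvA : ∀ R : MaxCliques G, v ∈ R.1 → SideA hT.1 Q Q' R := by
      intro R hR
      rcases total hT.1 hQQ R with hA | hB
      · exact hA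
      · exact absurd (mem_of_on_tp hT hR hvQ Q' hB) hvQ'
    have hv'B : ∀ R : MaxCliques G, v' ∈ R.1 → SideB hT.1 Q Q' R := by
      intro R hR
      rcases total hT.1 hQQ R with hA | hB
      · exact absurd (mem_of_on_tp hT hR hv'Q' Q hA) hv'Q
      · exact hB
    have hmixed : ∀ x : V, ∀ R₁ R₂ : MaxCliques G, x ∈ R₁.1 → x ∈ R₂.1 →
        SideA hT.1 Q Q' R₁ → SideB hT.1 Q Q' R₂ → x ∈ Q.1 ∩ Q'.1 := by
      intro x R₁ R₂ h1 h2 hA hB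
      obtain ⟨hQm, hQ'm⟩ := crossing hT.1 hQQ (tp hT.1 R₁ R₂) hB hA
      exact ⟨mem_of_on_tp hT h1 h2 Q hQm, mem_of_on_tp hT h1 h2 Q' hQ'm⟩
    have hne : v ≠ v' := fun h => hv'Q (h ▸ hvQ)
    have hnadj : ¬ G.Adj v v' := by
      intro hadj
      obtain ⟨t, htmax, htsub⟩ :=
        exists_isMaxClique_supset G (SimpleGraph.isClique_pair.2 fun _ => hadj)
      have hvR : v ∈ t := htsub (Set.mem_insert _ _)
      have hv'R : v' ∈ t := htsub (Set.mem_insert_of_mem _ rfl)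
      exact excl hT.1 hQQ ⟨t, htmax⟩ ⟨hvA ⟨t, htmax⟩ hvR, hv'B ⟨t, htmax⟩ hv'R⟩
    have hvS : v ∉ Q.1 ∩ Q'.1 := fun h => hvQ' h.2
    have hv'S : v' ∉ Q.1 ∩ Q'.1 := fun h => hv'Q h.1
    have hsep : Separates G (Q.1 ∩ Q'.1) v v' := by
      intro p
      by_contra hc
      push_neg at hc
      have hPv' : ¬ (∀ R : MaxCliques G, v' ∈ R.1 → SideA hT.1 Q Q' R) := by
        intro hp
        exact excl hT.1 hQQ Q' ⟨hp Q' hv'Q', hv'B Q' hv'Q'⟩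
      have chain : ∀ {a b : V} (q : G.Walk a b),
          (∀ x ∈ q.support, x ∉ Q.1 ∩ Q'.1) →
          (∀ R : MaxCliques G, a ∈ R.1 → SideA hT.1 Q Q' R) →
          ¬ (∀ R : MaxCliques G, b ∈ R.1 → SideA hT.1 Q Q' R) → False := by
        intro a b q
        induction q with
        | nil => exact fun _ ha hb => hb ha
        | @cons a c b hadj q' ih =>
          intro hsup ha hb
          by_cases hc2 : ∀ R : MaxCliques G, c ∈ R.1 → SideA hT.1 Q Q' R
          · exact ih (fun x hx => hsup x (List.mem_cons_of_mem _ hx)) hc2 hb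
          · push_neg at hc2
            obtain ⟨R, hcR, hnA⟩ := hc2
            have hBR : SideB hT.1 Q Q' R := (total hT.1 hQQ R).resolve_left hnA
            obtain ⟨t, htmax, htsub⟩ :=
              exists_isMaxClique_supset G (SimpleGraph.isClique_pair.2 fun _ => hadj)
            have haT : a ∈ t := htsub (Set.mem_insert _ _)
            have hcT : c ∈ t := htsub (Set.mem_insert_of_mem _ rfl)
            have hA' : SideA hT.1 Q Q' ⟨t, htmax⟩ := ha ⟨t, htmax⟩ haT
            have : c ∈ Q.1 ∩ Q'.1 := hmixed c ⟨t, htmax⟩ R hcT hcR hA' hBR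
            exact hsup c
              (List.mem_cons_of_mem _ (SimpleGraph.Walk.start_mem_support _)) this
      exact chain p hc hvA hPv'
    refine ⟨hne, hnadj, hvS, hv'S, hsep, ?_⟩
    intro S' hS' hsepp
    obtain ⟨s, hsS, hsS'⟩ := Set.exists_of_ssubset hS'
    have hvs : v ≠ s := fun h => hvQ' (h ▸ hsS.2)
    have hv's : v' ≠ s := fun h => hv'Q (h ▸ hsS.1)
    have h1 : G.Adj v s := Q.2.1 hvQ hsS.1 hvs
    have h2 : G.Adj s v' := Q'.2.1 hsS.2 hv'Q' (Ne.symm hv's)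
    obtain ⟨x, hx, hxS'⟩ := hsepp (Walk.cons h1 (Walk.cons h2 Walk.nil))
    have hxS : x ∈ Q.1 ∩ Q'.1 := hS'.subset hxS'
    simp only [Walk.support_cons, Walk.support_nil, List.mem_cons,
      List.mem_singleton, List.not_mem_nil, or_false] at hx
    rcases hx with rfl | rfl | rfl
    · exact hvS hxS
    · exact hsS' hxS'
    · exact hv'S hxS
  refine ⟨?_, main⟩
  have h1 : ∃ v, v ∈ Q.1 ∧ v ∉ Q'.1 := by
    by_contra h
    push_neg at h
    exact hQQ.ne (Subtype.ext (Q.2.2 Q'.1 Q'.2.1 h))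
  have h2 : ∃ v', v' ∈ Q'.1 ∧ v' ∉ Q.1 := by
    by_contra h
    push_neg at h
    exact hQQ.ne (Subtype.ext (Q'.2.2 Q.1 Q.2.1 h).symm)
  obtain ⟨v, hv1, hv2⟩ := h1
  obtain ⟨v', hv'1, hv'2⟩ := h2
  exact ⟨v, v', main v v' hv1 hv2 hv'1 hv'2⟩
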